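/- Let A be a unital C*-algebra with a unitary u and isometries w_m (m ≥ 1) satisfying w_{mn} = w_m w_n, w_m u = u^m w_m, and w_p* u^k w_p = 0 for every prime p and every 1 ≤ k < p. Then for all positive integers m, n and all integers l: if gcd(m,n) does not divide l then w_m* u^l w_n = 0, and if gcd(m,n) divides l then w_m* u^l w_n = w_{n'}* u^{l/gcd(m,n)} w_{m'}, where m' = m/gcd(m,n) and n' = n/gcd(m,n). -/

import Mathlib

set_option linter.unusedSectionVars false
set_option maxHeartbeats 1000000

section Stmt10Aux
variable {A : Type*} [NormedRing A] [StarRing A] [CStarRing A]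
    [NormedAlgebra ℂ A] [CompleteSpace A] [StarModule ℂ A]

lemma myU_add (u : unitary A) (a b : ℤ) :
    (↑(u ^ (a + b)) : A) = (↑(u ^ a) : A) * (↑(u ^ b) : A) := by
  rw [zpow_add]; rfl

lemma myU_nat (u : unitary A) (k : ℕ) : (↑(u ^ (k : ℤ)) : A) = (u : A) ^ k := by
  rw [zpow_natCast, SubmonoidClass.coe_pow]

lemma myU_negnat (u : unitary A) (k : ℕ) :
    (↑(u ^ (-(k : ℤ))) : A) = (star (u : A)) ^ k := by
  rw [zpow_neg, ← Unitary.star_eq_inv, ← star_pow, Unitary.coe_star, myU_nat]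

lemma comm_nat (u : unitary A) (w : ℕ → A)
    (hB1 : ∀ m : ℕ, 0 < m → w m * (u : A) = (u : A) ^ m * w m)
    (m : ℕ) (hm : 0 < m) (k : ℕ) :
    w m * (u : A) ^ k = (u : A) ^ (m * k) * w m := by
  induction k with
  | zero => simp
  | succ k ih =>
      rw [pow_succ, ← mul_assoc, ih, mul_assoc, hB1 m hm, ← mul_assoc, ← pow_add,
        Nat.mul_succ]

lemma comm_star_one (u : unitary A) (w : ℕ → A)
    (hB1 : ∀ m : ℕ, 0 < m → w m * (u : A) = (u : A) ^ m * w m)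
    (m : ℕ) (hm : 0 < m) :
    w m * star (u : A) = (star (u : A)) ^ m * w m := by
  have hv2 : (u : A) * star (u : A) = 1 := Unitary.coe_mul_star_self u
  have hsv : (star (u : A)) ^ m * (u : A) ^ m = 1 := by
    have hcomm : Commute (star (u : A)) (u : A) := by
      have hv1 : star (u : A) * (u : A) = 1 := Unitary.coe_star_mul_self u
      unfold Commute SemiconjBy
      rw [hv1, hv2]
    rw [← hcomm.mul_pow, Unitary.coe_star_mul_self, one_pow]
  calc w m * star (u : A)
      = (star (u : A)) ^ m * ((u : A) ^ m * (w m * star (u : A))) := by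
        rw [← mul_assoc, ← mul_assoc, hsv, one_mul]
    _ = (star (u : A)) ^ m * (w m * ((u : A) * star (u : A))) := by
        rw [← mul_assoc ((u:A)^m), ← hB1 m hm, mul_assoc]
    _ = (star (u : A)) ^ m * w m := by rw [hv2, mul_one]

lemma comm_star_nat (u : unitary A) (w : ℕ → A)
    (hB1 : ∀ m : ℕ, 0 < m → w m * (u : A) = (u : A) ^ m * w m)
    (m : ℕ) (hm : 0 < m) (k : ℕ) :
    w m * (star (u : A)) ^ k = (star (u : A)) ^ (m * k) * w m := by
  induction k with
  | zero => simp
  | succ k ih =>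
      rw [pow_succ, ← mul_assoc, ih, mul_assoc, comm_star_one u w hB1 m hm,
        ← mul_assoc, ← pow_add, Nat.mul_succ]

lemma comm_int (u : unitary A) (w : ℕ → A)
    (hB1 : ∀ m : ℕ, 0 < m → w m * (u : A) = (u : A) ^ m * w m)
    (m : ℕ) (hm : 0 < m) (l : ℤ) :
    w m * (↑(u ^ l) : A) = (↑(u ^ ((m : ℤ) * l)) : A) * w m := by
  obtain ⟨k, rfl | rfl⟩ := Int.eq_nat_or_neg l
  · rw [myU_nat, show (m : ℤ) * (k : ℤ) = ((m * k : ℕ) : ℤ) by push_cast; ring,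
      myU_nat, comm_nat u w hB1 m hm]
  · rw [myU_negnat, show (m : ℤ) * (-(k : ℤ)) = -((m * k : ℕ) : ℤ) by push_cast; ring,
      myU_negnat, comm_star_nat u w hB1 m hm]

lemma sandwich_mul (u : unitary A) (w : ℕ → A)
    (hiso : ∀ m : ℕ, 0 < m → star (w m) * w m = 1)
    (hB1 : ∀ m : ℕ, 0 < m → w m * (u : A) = (u : A) ^ m * w m)
    (d : ℕ) (hd : 0 < d) (q : ℤ) :
    star (w d) * (↑(u ^ ((d : ℤ) * q)) : A) * w d = (↑(u ^ q) : A) := by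
  rw [mul_assoc, ← comm_int u w hB1 d hd q, ← mul_assoc, hiso d hd, one_mul]

lemma sandwich_prime_zero (u : unitary A) (w : ℕ → A)
    (hB1 : ∀ m : ℕ, 0 < m → w m * (u : A) = (u : A) ^ m * w m)
    (hB3 : ∀ p k : ℕ, Nat.Prime p → 1 ≤ k → k < p →
      star (w p) * (u : A) ^ k * w p = 0)
    (p : ℕ) (hp : Nat.Prime p) (l : ℤ) (hndvd : ¬ ((p : ℤ) ∣ l)) :
    star (w p) * (↑(u ^ l) : A) * w p = 0 := by
  have hp0 : (0 : ℤ) < (p : ℤ) := by exact_mod_cast hp.pos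
  set r : ℤ := l % (p : ℤ) with hr
  set q : ℤ := l / (p : ℤ) with hq
  have hdm := Int.mul_ediv_add_emod l (p : ℤ)
  have hl : l = r + (p : ℤ) * q := by rw [hr, hq]; linarith
  have hr0 : 0 ≤ r := Int.emod_nonneg l (by exact_mod_cast hp.pos.ne')
  have hrp : r < (p : ℤ) := Int.emod_lt_of_pos l hp0
  have hr1 : 1 ≤ r := by
    rcases lt_or_eq_of_le hr0 with h | h
    · omega
    · exfalso; exact hndvd (by rw [Int.dvd_iff_emod_eq_zero]; omega)
  set k : ℕ := r.toNat with hk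
  have hrk : r = (k : ℤ) := by omega
  have hk1 : 1 ≤ k := by omega
  have hkp : k < p := by omega
  have h1 : (↑(u ^ l) : A) = (u : A) ^ k * (↑(u ^ ((p : ℤ) * q)) : A) := by
    rw [hl, myU_add, hrk, myU_nat]
  rw [h1, ← mul_assoc, mul_assoc _ _ (w p), ← comm_int u w hB1 p hp.pos q,
    ← mul_assoc, hB3 p k hp hk1 hkp, zero_mul]

lemma lemA (u : unitary A) (w : ℕ → A)
    (hiso : ∀ m : ℕ, 0 < m → star (w m) * w m = 1)
    (hB0 : ∀ m n : ℕ, 0 < m → 0 < n → w (m * n) = w m * w n)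
    (hB1 : ∀ m : ℕ, 0 < m → w m * (u : A) = (u : A) ^ m * w m)
    (hB3 : ∀ p k : ℕ, Nat.Prime p → 1 ≤ k → k < p →
      star (w p) * (u : A) ^ k * w p = 0) :
    ∀ m : ℕ, 0 < m → ∀ l : ℤ,
      (¬ ((m : ℤ) ∣ l) → star (w m) * (↑(u ^ l) : A) * w m = 0) ∧
      (((m : ℤ) ∣ l) → star (w m) * (↑(u ^ l) : A) * w m = (↑(u ^ (l / (m : ℤ))) : A)) := by
  intro m
  induction m using Nat.strong_induction_on with
  | _ m ih =>
    intro hm l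
    rcases eq_or_lt_of_le (show 1 ≤ m from hm) with h1 | h1
    · -- m = 1
      have hw1 : w 1 = 1 := by
        have h := hB0 1 1 one_pos one_pos
        rw [mul_one] at h
        calc w 1 = (star (w 1) * w 1) * w 1 := by rw [hiso 1 one_pos, one_mul]
          _ = star (w 1) * w 1 := by rw [mul_assoc, ← h]
          _ = 1 := hiso 1 one_pos
      rw [← h1]
      constructor
      · intro h; exact absurd (one_dvd l) h
      · intro _; simp [hw1]
    · -- m > 1
      set p := m.minFac with hpdef
      have hp : p.Prime := Nat.minFac_prime (by omega)
      obtain ⟨m1, hm1⟩ : p ∣ m := Nat.minFac_dvd m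
      have hm1pos : 0 < m1 := by
        rcases Nat.eq_zero_or_pos m1 with h | h
        · subst h; simp at hm1; omega
        · exact h
      have hm1lt : m1 < m := by
        have h2 : 2 * m1 ≤ p * m1 := Nat.mul_le_mul_right _ hp.two_le
        omega
      have hwm : w m = w p * w m1 := by rw [hm1]; exact hB0 p m1 hp.pos hm1pos
      have key : star (w m) * (↑(u ^ l) : A) * w m
          = star (w m1) * (star (w p) * (↑(u ^ l) : A) * w p) * w m1 := by
        rw [hwm, star_mul]
        simp [mul_assoc]
      by_cases hpl : (p : ℤ) ∣ l
      · obtain ⟨q, rfl⟩ := hpl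
        rw [key, sandwich_mul u w hiso hB1 p hp.pos q]
        have hdvd_iff : ((m : ℤ) ∣ (p : ℤ) * q) ↔ ((m1 : ℤ) ∣ q) := by
          rw [hm1]
          push_cast
          exact mul_dvd_mul_iff_left (by exact_mod_cast hp.pos.ne')
        have hdiv_eq : ((p : ℤ) * q) / (m : ℤ) = q / (m1 : ℤ) := by
          rw [hm1]
          push_cast
          exact Int.mul_ediv_mul_of_pos _ _ (by exact_mod_cast hp.pos)
        obtain ⟨ha, hb⟩ := ih m1 hm1lt hm1pos q
        constructor
        · intro h
          exact ha (fun hc => h (hdvd_iff.mpr hc))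
        · intro h
          rw [hb (hdvd_iff.mp h), hdiv_eq]
      · rw [key, sandwich_prime_zero u w hB1 hB3 p hp l hpl, mul_zero, zero_mul]
        constructor
        · intro _; rfl
        · intro h
          exfalso
          have hpm : (p : ℤ) ∣ (m : ℤ) := ⟨(m1 : ℤ), by exact_mod_cast hm1⟩
          exact hpl (dvd_trans hpm h)

end Stmt10Aux


/-- for `d = gcd(m,n)`, `w_m* u^l w_n = 0` if `d ∤ l`, and otherwise
`w_m* u^l w_n = w_{m/d}* u^{l/d} w_{n/d}` (i.e. `w_{n^{-1}(m∨n)}* u^{l/d} w_{m^{-1}(m∨n)}`). -/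
theorem stmt10 {A : Type*} [NormedRing A] [StarRing A] [CStarRing A]
    [NormedAlgebra ℂ A] [CompleteSpace A] [StarModule ℂ A]
    (u : unitary A) (w : ℕ → A)
    (hiso : ∀ m : ℕ, 0 < m → star (w m) * w m = 1)
    (hB0 : ∀ m n : ℕ, 0 < m → 0 < n → w (m * n) = w m * w n)
    (hB1 : ∀ m : ℕ, 0 < m → w m * (u : A) = (u : A) ^ m * w m)
    (hB3 : ∀ p k : ℕ, Nat.Prime p → 1 ≤ k → k < p →
      star (w p) * (u : A) ^ k * w p = 0)
    (m n : ℕ) (hm : 0 < m) (hn : 0 < n) (l : ℤ) :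
    (¬ ((Nat.gcd m n : ℤ) ∣ l) → star (w m) * (↑(u ^ l) : A) * w n = 0) ∧
    (((Nat.gcd m n : ℤ) ∣ l) →
      star (w m) * (↑(u ^ l) : A) * w n
        = star (w (m / Nat.gcd m n)) * (↑(u ^ (l / (Nat.gcd m n : ℤ))) : A)
            * w (n / Nat.gcd m n)) := by
  set d := Nat.gcd m n with hd
  have hdpos : 0 < d := Nat.gcd_pos_of_pos_left n hm
  set m' := m / d with hm'
  set n' := n / d with hn'
  have hmd : m = d * m' := by
    rw [hm', Nat.mul_div_cancel' (Nat.gcd_dvd_left m n)]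
  have hnd : n = d * n' := by
    rw [hn', Nat.mul_div_cancel' (Nat.gcd_dvd_right m n)]
  have hm'pos : 0 < m' := Nat.div_pos (Nat.le_of_dvd hm (Nat.gcd_dvd_left m n)) hdpos
  have hn'pos : 0 < n' := Nat.div_pos (Nat.le_of_dvd hn (Nat.gcd_dvd_right m n)) hdpos
  have hwm : w m = w d * w m' := by rw [hmd]; exact hB0 d m' hdpos hm'pos
  have hwn : w n = w d * w n' := by rw [hnd]; exact hB0 d n' hdpos hn'pos
  have key : star (w m) * (↑(u ^ l) : A) * w n
      = star (w m') * (star (w d) * (↑(u ^ l) : A) * w d) * w n' := by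
    rw [hwm, hwn, star_mul]
    simp [mul_assoc]
  obtain ⟨ha, hb⟩ := lemA u w hiso hB0 hB1 hB3 d hdpos l
  constructor
  · intro h
    rw [key, ha h, mul_zero, zero_mul]
  · intro h
    rw [key, hb h]
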